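/- arXiv:1908.11040 — 3 statements merged into one kernel-verified Lean document; each statement's English description precedes it below -/
import Mathlib

section
/- Let $(\phi_t)$ be a measure-preserving flow on a probability space $(M,\mu)$, $f \in L^2(M,\mu)$ with spectral measure $\sigma_f$. Suppose there exist $C>0$, $T_0>0$ and $0 \le \alpha_+ < 1$ such that for all $T \ge T_0$, $\big\| \int_0^T e^{-2\pi i\lambda t} f\circ\phi_t\, dt \big\|_{L^2} \ge C^{-1} T^{1-\alpha_+}$. Then there exist $C'>0$ and $r_0>0$ such that for all $0 < r < r_0$, $\sigma_f([\lambda - r, \lambda + r]) \ge (C')^{-1} r^{2\alpha_+/(1-\alpha_+)}$. In particular the upper local dimension satisfies $\overline{d}_f(\lambda) := \limsup_{r\to 0^+} \frac{\log \sigma_f([\lambda-r,\lambda+r])}{\log r} \le \frac{2\alpha_+}{1-\alpha_+}$. -/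
open MeasureTheory Real Set Filter Topology

lemma exp_mul_I_sub_one_norm_le_abs (x : ℝ) :
    ‖Complex.exp ((x : ℂ) * Complex.I) - 1‖ ≤ |x| := by
  have hrepr : Complex.exp ((x : ℂ) * Complex.I) - 1
      = ((Real.cos x - 1 : ℝ) : ℂ) + ((Real.sin x : ℝ) : ℂ) * Complex.I := by
    rw [Complex.exp_mul_I, ← Complex.ofReal_cos, ← Complex.ofReal_sin]
    push_cast
    ring
  rw [hrepr, Complex.norm_def, Complex.normSq_add_mul_I,
    ← Real.sqrt_sq_eq_abs]
  apply Real.sqrt_le_sqrt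
  have hs : Real.sin (x / 2) ^ 2 + Real.cos (x / 2) ^ 2 = 1 := Real.sin_sq_add_cos_sq _
  have hc : Real.cos (x / 2) ^ 2 = 1 / 2 + Real.cos (2 * (x / 2)) / 2 := Real.cos_sq _
  have hx2 : 2 * (x / 2) = x := by ring
  rw [hx2] at hc
  have hsin : Real.sin (x / 2) ^ 2 ≤ (x / 2) ^ 2 := by
    calc Real.sin (x / 2) ^ 2 = |Real.sin (x / 2)| ^ 2 := (sq_abs _).symm
      _ ≤ |x / 2| ^ 2 := pow_le_pow_left₀ (abs_nonneg _) Real.abs_sin_le_abs 2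
      _ = (x / 2) ^ 2 := sq_abs _
  have hx : Real.sin x ^ 2 + Real.cos x ^ 2 = 1 := Real.sin_sq_add_cos_sq _
  nlinarith

lemma exp_mul_I_sub_one_norm_le_two (x : ℝ) :
    ‖Complex.exp ((x : ℂ) * Complex.I) - 1‖ ≤ 2 := by
  calc ‖Complex.exp ((x : ℂ) * Complex.I) - 1‖
      ≤ ‖Complex.exp ((x : ℂ) * Complex.I)‖ + ‖(1 : ℂ)‖ := norm_sub_le _ _
    _ = 2 := by
        rw [Complex.norm_exp_ofReal_mul_I]
        norm_num

set_option maxHeartbeats 1000000 in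
/-- If the `L²` norm `F T` of the twisted ergodic integral satisfies the spectral
identity (kernel `K`, equal to `T²` at `ξ = λ`) together with `σ(ℝ) = ‖f‖²` and the lower bound
`F T ≥ C⁻¹ T^{1-α₊}` for `T ≥ T₀` with `0 ≤ α₊ < 1`, then there are `C' > 0` and `r₀ > 0` with
`σ_f([λ-r, λ+r]) ≥ (C')⁻¹ r^{2α₊/(1-α₊)}` for `0 < r < r₀`; in particular the upper local
dimension of `σ_f` at `λ` is at most `2α₊/(1-α₊)`. -/
theorem stmt3 (σ : Measure ℝ) [IsFiniteMeasure σ] (lam : ℝ)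
    (F : ℝ → ℝ) (K : ℝ → ℝ → ℝ) (normf : ℝ)
    (hFnn : ∀ T, 0 ≤ F T)
    (hKdiag : ∀ T : ℝ, K T lam = T ^ 2)
    (hKoff : ∀ T ξ : ℝ, ξ ≠ lam →
      K T ξ = ‖(Complex.exp (-(((2 * π * (lam - ξ) * T : ℝ) : ℂ)) * Complex.I) - 1) /
        (((2 * π * (lam - ξ) : ℝ) : ℂ) * Complex.I)‖ ^ 2)
    (hspec : ∀ T : ℝ, 0 < T → F T ^ 2 = ∫ ξ : ℝ, K T ξ ∂σ)
    (hmass : (σ Set.univ).toReal = normf ^ 2)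
    (C T0 α : ℝ) (hC : 0 < C) (hT0 : 0 < T0) (hα0 : 0 ≤ α) (hα1 : α < 1)
    (hbound : ∀ T : ℝ, T0 ≤ T → C⁻¹ * T ^ (1 - α) ≤ F T) :
    (∃ C' : ℝ, 0 < C' ∧ ∃ r0 : ℝ, 0 < r0 ∧ ∀ r : ℝ, 0 < r → r < r0 →
      C'⁻¹ * r ^ (2 * α / (1 - α)) ≤ (σ (Icc (lam - r) (lam + r))).toReal) ∧
    limsup (fun r : ℝ => Real.log ((σ (Icc (lam - r) (lam + r))).toReal) / Real.log r)
        (nhdsWithin 0 (Ioi 0)) ≤ 2 * α / (1 - α) := by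
  have hπ : (0 : ℝ) < π := Real.pi_pos
  have h1α : (0 : ℝ) < 1 - α := by linarith
  have h2α : (0 : ℝ) < 2 - 2 * α := by linarith
  set A : ℝ := max T0 (max 1 ((2 * C ^ 2 * normf ^ 2 / π ^ 2 + 1) ^ ((1 : ℝ) / (2 - 2 * α))))
    with hA_def
  have hA1 : (1 : ℝ) ≤ A := (le_max_left 1 _).trans (le_max_right T0 _)
  have hApos : (0 : ℝ) < A := lt_of_lt_of_le one_pos hA1
  set D : ℝ := 2 * C ^ 2 * A ^ (2 * α) with hD_def
  have hA2αpos : (0 : ℝ) < A ^ (2 * α) := Real.rpow_pos_of_pos hApos _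
  have hDpos : 0 < D := by positivity
  -- the contribution of A to the tail bound
  have hA_tail : 2 * C ^ 2 * normf ^ 2 / π ^ 2 + 1 ≤ A ^ (2 - 2 * α) := by
    have hxpos : (0 : ℝ) < 2 * C ^ 2 * normf ^ 2 / π ^ 2 + 1 := by positivity
    have hyA : (2 * C ^ 2 * normf ^ 2 / π ^ 2 + 1) ^ ((1 : ℝ) / (2 - 2 * α)) ≤ A :=
      (le_max_right 1 _).trans (le_max_right T0 _)
    calc 2 * C ^ 2 * normf ^ 2 / π ^ 2 + 1
        = ((2 * C ^ 2 * normf ^ 2 / π ^ 2 + 1) ^ ((1 : ℝ) / (2 - 2 * α))) ^ (2 - 2 * α) := by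
          rw [← Real.rpow_mul hxpos.le, one_div_mul_cancel (ne_of_gt h2α), Real.rpow_one]
      _ ≤ A ^ (2 - 2 * α) := Real.rpow_le_rpow (Real.rpow_nonneg hxpos.le _) hyA h2α.le
  -- main quantitative claim
  have key : ∀ r : ℝ, 0 < r → r < 1 →
      D⁻¹ * r ^ (2 * α / (1 - α)) ≤ (σ (Icc (lam - r) (lam + r))).toReal := by
    intro r hr hr1
    set s : ℝ := r ^ (-(1 / (1 - α))) with hs_def
    have hspos : 0 < s := Real.rpow_pos_of_pos hr _
    have hs1 : (1 : ℝ) ≤ s :=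
      Real.one_le_rpow_of_pos_of_le_one_of_nonpos hr hr1.le
        (neg_nonpos.mpr (by positivity))
    set T : ℝ := A * s with hT_def
    have hTpos : 0 < T := by positivity
    have hTT0 : T0 ≤ T :=
      (le_max_left T0 _).trans (le_mul_of_one_le_right hApos.le hs1)
    -- kernel bounds
    have hKnn : ∀ ξ, 0 ≤ K T ξ := by
      intro ξ
      by_cases hξ : ξ = lam
      · rw [hξ, hKdiag]; positivity
      · rw [hKoff T ξ hξ]; positivity
    have hK_le_sq : ∀ ξ, K T ξ ≤ T ^ 2 := by
      intro ξ
      by_cases hξ : ξ = lam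
      · rw [hξ, hKdiag]
      · rw [hKoff T ξ hξ]
        set c : ℝ := 2 * π * (lam - ξ) with hc_def
        have hcne : c ≠ 0 := by
          have hlξ : lam - ξ ≠ 0 := sub_ne_zero.mpr (Ne.symm hξ)
          exact mul_ne_zero (mul_ne_zero two_ne_zero Real.pi_ne_zero) hlξ
        have hcabs : 0 < |c| := abs_pos.mpr hcne
        have hnum : ‖Complex.exp (-((c * T : ℝ) : ℂ) * Complex.I) - 1‖ ≤ |c| * T := by
          have h := exp_mul_I_sub_one_norm_le_abs (-(c * T))
          rw [Complex.ofReal_neg] at h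
          calc ‖Complex.exp (-((c * T : ℝ) : ℂ) * Complex.I) - 1‖ ≤ |(-(c * T))| := h
            _ = |c| * T := by rw [abs_neg, abs_mul, abs_of_pos hTpos]
        have hden : ‖((c : ℝ) : ℂ) * Complex.I‖ = |c| := by
          rw [norm_mul, Complex.norm_I,
            Complex.norm_real, Real.norm_eq_abs, mul_one]
        rw [norm_div, hden]
        have hq : ‖Complex.exp (-((c * T : ℝ) : ℂ) * Complex.I) - 1‖ / |c| ≤ T := by
          rw [div_le_iff₀ hcabs]
          calc ‖Complex.exp (-((c * T : ℝ) : ℂ) * Complex.I) - 1‖ ≤ |c| * T := hnum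
            _ = T * |c| := mul_comm _ _
        exact pow_le_pow_left₀ (by positivity) hq 2
    have hK_le_tail : ∀ ξ, ξ ≠ lam → K T ξ ≤ ((π * |ξ - lam|)⁻¹) ^ 2 := by
      intro ξ hξ
      rw [hKoff T ξ hξ]
      set c : ℝ := 2 * π * (lam - ξ) with hc_def
      have hlξ : lam - ξ ≠ 0 := sub_ne_zero.mpr (Ne.symm hξ)
      have hcne : c ≠ 0 := mul_ne_zero (mul_ne_zero two_ne_zero Real.pi_ne_zero) hlξ
      have hcabs : 0 < |c| := abs_pos.mpr hcne
      have habsξ : 0 < |ξ - lam| := abs_pos.mpr (sub_ne_zero.mpr hξ)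
      have hnum : ‖Complex.exp (-((c * T : ℝ) : ℂ) * Complex.I) - 1‖ ≤ 2 := by
        have h := exp_mul_I_sub_one_norm_le_two (-(c * T))
        rwa [Complex.ofReal_neg] at h
      have hden : ‖((c : ℝ) : ℂ) * Complex.I‖ = |c| := by
        rw [norm_mul, Complex.norm_I,
          Complex.norm_real, Real.norm_eq_abs, mul_one]
      rw [norm_div, hden]
      have habsc : |c| = 2 * π * |ξ - lam| := by
        rw [hc_def, abs_mul, abs_mul, abs_sub_comm, abs_of_pos hπ]
        norm_num
      have hq : ‖Complex.exp (-((c * T : ℝ) : ℂ) * Complex.I) - 1‖ / |c|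
          ≤ (π * |ξ - lam|)⁻¹ := by
        rw [div_le_iff₀ hcabs, habsc]
        have hcc : (π * |ξ - lam|)⁻¹ * (2 * π * |ξ - lam|) = 2 := by
          field_simp
        rw [hcc]
        exact hnum
      exact pow_le_pow_left₀ (by positivity) hq 2
    -- integral bound
    set m : ℝ := (σ (Icc (lam - r) (lam + r))).toReal with hm_def
    have hmono : ∀ ξ : ℝ, K T ξ ≤ (Icc (lam - r) (lam + r)).indicator (fun _ => T ^ 2) ξ
        + ((π * r)⁻¹) ^ 2 := by
      intro ξ
      by_cases hmem : ξ ∈ Icc (lam - r) (lam + r)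
      · rw [Set.indicator_of_mem hmem]
        have h1 := hK_le_sq ξ
        have h2 : (0 : ℝ) ≤ ((π * r)⁻¹) ^ 2 := by positivity
        linarith
      · rw [Set.indicator_of_notMem hmem, zero_add]
        rw [Set.mem_Icc, not_and_or, not_le, not_le] at hmem
        have hfar : r < |ξ - lam| := by
          rcases hmem with h | h
          · rw [abs_of_neg (by linarith)]; linarith
          · rw [abs_of_pos (by linarith)]; linarith
        have hξ : ξ ≠ lam := by
          intro h
          rw [h, sub_self, abs_zero] at hfar
          linarith
        calc K T ξ ≤ ((π * |ξ - lam|)⁻¹) ^ 2 := hK_le_tail ξ hξ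
          _ ≤ ((π * r)⁻¹) ^ 2 := by
              have h1 : 0 < π * r := by positivity
              have h2 : π * r ≤ π * |ξ - lam| := by nlinarith
              exact pow_le_pow_left₀ (by positivity) (inv_anti₀ h1 h2) 2
    have hint : F T ^ 2 ≤ T ^ 2 * m + ((π * r)⁻¹) ^ 2 * normf ^ 2 := by
      rw [hspec T hTpos]
      calc ∫ ξ, K T ξ ∂σ
          ≤ ∫ ξ, ((Icc (lam - r) (lam + r)).indicator (fun _ => T ^ 2) ξ
              + ((π * r)⁻¹) ^ 2) ∂σ :=
            integral_mono_of_nonneg (Eventually.of_forall hKnn)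
              (((integrable_const _).indicator measurableSet_Icc).add (integrable_const _))
              (Eventually.of_forall hmono)
        _ = T ^ 2 * m + ((π * r)⁻¹) ^ 2 * normf ^ 2 := by
            rw [integral_add ((integrable_const _).indicator measurableSet_Icc)
              (integrable_const _), integral_indicator_const _ measurableSet_Icc,
              integral_const, measureReal_def, measureReal_def, hmass, smul_eq_mul, smul_eq_mul, hm_def]
            ring
    -- lower bound on F T ^ 2
    have hF2 : C⁻¹ ^ 2 * T ^ (2 - 2 * α) ≤ F T ^ 2 := by
      have h := hbound T hTT0
      have h0 : 0 ≤ C⁻¹ * T ^ (1 - α) := by positivity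
      have hE : (T ^ (1 - α)) ^ 2 = T ^ (2 - 2 * α) := by
        rw [sq, ← Real.rpow_add hTpos]
        congr 1
        ring
      calc C⁻¹ ^ 2 * T ^ (2 - 2 * α) = (C⁻¹ * T ^ (1 - α)) ^ 2 := by
            rw [mul_pow, hE]
        _ ≤ F T ^ 2 := pow_le_pow_left₀ h0 h 2
    -- compute T ^ (2 - 2α)
    have hT22 : T ^ (2 - 2 * α) = A ^ (2 - 2 * α) * (r ^ 2)⁻¹ := by
      rw [hT_def, Real.mul_rpow hApos.le hspos.le, hs_def, ← Real.rpow_mul hr.le]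
      have hexp : -(1 / (1 - α)) * (2 - 2 * α) = -2 := by
        field_simp
      rw [hexp, Real.rpow_neg hr.le]
      congr 2
      rw [show (2 : ℝ) = ((2 : ℕ) : ℝ) by norm_num, Real.rpow_natCast]
    -- tail control
    have htail : ((π * r)⁻¹) ^ 2 * normf ^ 2 ≤ 1 / 2 * (C⁻¹ ^ 2 * T ^ (2 - 2 * α)) := by
      rw [hT22]
      have hu : (0 : ℝ) < (r ^ 2)⁻¹ := by positivity
      have hC2 : C⁻¹ ^ 2 * C ^ 2 = 1 := by field_simp
      have hππ : ((π * r)⁻¹) ^ 2 = (π ^ 2)⁻¹ * (r ^ 2)⁻¹ := by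
        rw [mul_inv, mul_pow, inv_pow, inv_pow]
      rw [hππ]
      have hkey : (π ^ 2)⁻¹ * normf ^ 2 ≤ 1 / 2 * (C⁻¹ ^ 2 * A ^ (2 - 2 * α)) := by
        have h2 : 1 / 2 * (C⁻¹ ^ 2 * (2 * C ^ 2 * normf ^ 2 / π ^ 2 + 1))
            ≤ 1 / 2 * (C⁻¹ ^ 2 * A ^ (2 - 2 * α)) := by
          have hCnn : (0 : ℝ) ≤ C⁻¹ ^ 2 := by positivity
          nlinarith [hA_tail]
        refine le_trans ?_ h2
        have expand : 1 / 2 * (C⁻¹ ^ 2 * (2 * C ^ 2 * normf ^ 2 / π ^ 2 + 1))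
            = (π ^ 2)⁻¹ * normf ^ 2 * (C⁻¹ ^ 2 * C ^ 2) + 1 / 2 * C⁻¹ ^ 2 := by
          field_simp
        rw [expand, hC2, mul_one]
        have : (0 : ℝ) ≤ 1 / 2 * C⁻¹ ^ 2 := by positivity
        linarith
      calc (π ^ 2)⁻¹ * (r ^ 2)⁻¹ * normf ^ 2 = ((π ^ 2)⁻¹ * normf ^ 2) * (r ^ 2)⁻¹ := by
            ring
        _ ≤ (1 / 2 * (C⁻¹ ^ 2 * A ^ (2 - 2 * α))) * (r ^ 2)⁻¹ :=
            mul_le_mul_of_nonneg_right hkey hu.le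
        _ = 1 / 2 * (C⁻¹ ^ 2 * (A ^ (2 - 2 * α) * (r ^ 2)⁻¹)) := by ring
    -- combine
    have hmain : 1 / 2 * (C⁻¹ ^ 2 * T ^ (2 - 2 * α)) ≤ T ^ 2 * m := by linarith
    have hsplit : T ^ (2 - 2 * α) = T ^ 2 * T ^ (-(2 * α)) := by
      rw [← Real.rpow_natCast T 2, ← Real.rpow_add hTpos]
      congr 1
    have hT2pos : (0 : ℝ) < T ^ 2 := by positivity
    have hm_lb : 1 / 2 * C⁻¹ ^ 2 * T ^ (-(2 * α)) ≤ m := by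
      rw [hsplit] at hmain
      rw [show 1 / 2 * (C⁻¹ ^ 2 * (T ^ 2 * T ^ (-(2 * α))))
          = (1 / 2 * C⁻¹ ^ 2 * T ^ (-(2 * α))) * T ^ 2 by ring] at hmain
      rw [show T ^ 2 * m = m * T ^ 2 by ring] at hmain
      exact le_of_mul_le_mul_right hmain hT2pos
    have hTneg : T ^ (-(2 * α)) = A ^ (-(2 * α)) * r ^ (2 * α / (1 - α)) := by
      rw [hT_def, Real.mul_rpow hApos.le hspos.le, hs_def, ← Real.rpow_mul hr.le]
      congr 2
      field_simp
    calc D⁻¹ * r ^ (2 * α / (1 - α))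
        = 1 / 2 * C⁻¹ ^ 2 * (A ^ (-(2 * α)) * r ^ (2 * α / (1 - α))) := by
          rw [hD_def, Real.rpow_neg hApos.le, mul_inv, mul_inv, ← inv_pow]
          ring
      _ = 1 / 2 * C⁻¹ ^ 2 * T ^ (-(2 * α)) := by rw [hTneg]
      _ ≤ m := hm_lb
  -- conclusion
  refine ⟨⟨D, hDpos, 1, one_pos, fun r hr hr1 => key r hr hr1⟩, ?_⟩
  clear_value A D
  clear hA_def hA_tail hA1 hApos hA2αpos hD_def hbound hKoff hKdiag hspec hFnn
  have hdiv : ∀ c : ℝ, Tendsto (fun r : ℝ => c / Real.log r) (𝓝[>] (0 : ℝ)) (𝓝 0) := by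
    intro c
    have h1 : Tendsto (fun r : ℝ => -Real.log r) (𝓝[>] (0 : ℝ)) atTop :=
      tendsto_neg_atBot_atTop.comp Real.tendsto_log_nhdsGT_zero
    have h2 := h1.inv_tendsto_atTop
    have h3 := h2.const_mul (-c)
    rw [mul_zero] at h3
    refine h3.congr fun r => ?_
    show -c * (-Real.log r)⁻¹ = c / Real.log r
    rw [inv_neg, div_eq_mul_inv]
    ring
  have hv : Tendsto (fun r : ℝ => 2 * α / (1 - α) + (-Real.log D) / Real.log r)
      (𝓝[>] (0 : ℝ)) (𝓝 (2 * α / (1 - α))) := by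
    have h := (tendsto_const_nhds : Tendsto (fun _ : ℝ => 2 * α / (1 - α))
      (𝓝[>] (0 : ℝ)) (𝓝 (2 * α / (1 - α)))).add (hdiv (-Real.log D))
    rw [add_zero] at h
    exact h
  have hev : ∀ᶠ r in 𝓝[>] (0 : ℝ), 0 < r ∧ r < 1 := by
    filter_upwards [self_mem_nhdsWithin,
      eventually_nhdsWithin_of_eventually_nhds (eventually_lt_nhds one_pos)] with r h1 h2
    exact ⟨h1, h2⟩
  have hle : ∀ᶠ r in 𝓝[>] (0 : ℝ),
      Real.log ((σ (Icc (lam - r) (lam + r))).toReal) / Real.log r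
        ≤ 2 * α / (1 - α) + (-Real.log D) / Real.log r := by
    filter_upwards [hev] with r hr
    obtain ⟨hr0, hr1⟩ := hr
    have hkey := key r hr0 hr1
    have hlogr : Real.log r < 0 := Real.log_neg hr0 hr1
    have hlogrne : Real.log r ≠ 0 := ne_of_lt hlogr
    have hppos : 0 < D⁻¹ * r ^ (2 * α / (1 - α)) := by positivity
    have hspos : 0 < (σ (Icc (lam - r) (lam + r))).toReal := lt_of_lt_of_le hppos hkey
    have hlog : -Real.log D + 2 * α / (1 - α) * Real.log r
        ≤ Real.log ((σ (Icc (lam - r) (lam + r))).toReal) := by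
      have h1 : Real.log (D⁻¹ * r ^ (2 * α / (1 - α)))
          ≤ Real.log ((σ (Icc (lam - r) (lam + r))).toReal) :=
        Real.log_le_log hppos hkey
      rwa [Real.log_mul (by positivity) (by positivity), Real.log_inv,
        Real.log_rpow hr0] at h1
    have h3 : 2 * α / (1 - α) + (-Real.log D) / Real.log r
        = (-Real.log D + 2 * α / (1 - α) * Real.log r) / Real.log r := by
      rw [add_div, mul_div_cancel_right₀ _ hlogrne, add_comm]
    rw [h3, div_le_div_right_of_neg hlogr]
    exact hlog
  have hge : ∀ᶠ r in 𝓝[>] (0 : ℝ),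
      (-1 : ℝ) ≤ Real.log ((σ (Icc (lam - r) (lam + r))).toReal) / Real.log r := by
    filter_upwards [hev,
      (hdiv (Real.log ((σ Set.univ).toReal))).eventually
        (eventually_gt_nhds (show (-1 : ℝ) < 0 by norm_num))] with r hr hW
    obtain ⟨hr0, hr1⟩ := hr
    have hkey := key r hr0 hr1
    have hlogr : Real.log r < 0 := Real.log_neg hr0 hr1
    have hppos : 0 < D⁻¹ * r ^ (2 * α / (1 - α)) := by positivity
    have hspos : 0 < (σ (Icc (lam - r) (lam + r))).toReal := lt_of_lt_of_le hppos hkey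
    have hsM : (σ (Icc (lam - r) (lam + r))).toReal ≤ (σ Set.univ).toReal :=
      ENNReal.toReal_mono (measure_ne_top σ _) (measure_mono (subset_univ _))
    have hlogM : Real.log ((σ (Icc (lam - r) (lam + r))).toReal)
        ≤ Real.log ((σ Set.univ).toReal) := Real.log_le_log hspos hsM
    have h5 := (div_le_div_right_of_neg hlogr).mpr hlogM
    have hW' : (-1 : ℝ) < Real.log ((σ Set.univ).toReal) / Real.log r := hW
    linarith
  have hcb : IsCoboundedUnder (· ≤ ·) (𝓝[>] (0 : ℝ))
      (fun r : ℝ => Real.log ((σ (Icc (lam - r) (lam + r))).toReal) / Real.log r) :=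
    isCoboundedUnder_le_of_eventually_le _ hge
  have hbnd : IsBoundedUnder (· ≤ ·) (𝓝[>] (0 : ℝ))
      (fun r : ℝ => 2 * α / (1 - α) + (-Real.log D) / Real.log r) :=
    hv.isBoundedUnder_le
  calc limsup (fun r : ℝ => Real.log ((σ (Icc (lam - r) (lam + r))).toReal) / Real.log r)
        (𝓝[>] (0 : ℝ))
      ≤ limsup (fun r : ℝ => 2 * α / (1 - α) + (-Real.log D) / Real.log r)
        (𝓝[>] (0 : ℝ)) := limsup_le_limsup hle hcb hbnd
    _ = 2 * α / (1 - α) := hv.limsup_eq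
end

section
/- Let $\sigma$ be a finite positive measure on $\mathbb{R}$, $\lambda\in\mathbb{R}$, and suppose there exist $C>0$, $r_0>0$, and $0 \le \beta \le 1$ such that $\sigma([\lambda-r,\lambda+r]) \le C r^{2\beta}$ for all $0 < r \le r_0$. Assume $\beta < 1$. Then there exists $C'>0$ such that for all $T \ge 1/r_0$, $T^2 \int_{\mathbb{R}} \Big|\frac{e^{-2\pi i (\lambda-\xi)T} - 1}{2\pi i (\lambda-\xi) T}\Big|^2 d\sigma(\xi) \le C'\, T^{2(1-\beta)}$. -/
open MeasureTheory Real Set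


lemma norm_exp_sub_one_sq (θ : ℝ) :
    ‖Complex.exp (-(θ:ℂ) * Complex.I) - 1‖ ^ 2 = 2 - 2 * Real.cos θ := by
  have h : Complex.exp (-(θ:ℂ) * Complex.I) - 1
      = ((Real.cos θ - 1 : ℝ) : ℂ) + ((-Real.sin θ : ℝ) : ℂ) * Complex.I := by
    rw [Complex.exp_mul_I, Complex.cos_neg, Complex.sin_neg,
      ← Complex.ofReal_cos, ← Complex.ofReal_sin]
    push_cast
    ring
  rw [h, Complex.norm_add_mul_I, Real.sq_sqrt (by positivity)]
  nlinarith [Real.sin_sq_add_cos_sq θ]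

lemma kernel_le (θ : ℝ) (hθ : θ ≠ 0) :
    ‖(Complex.exp (-(θ:ℂ) * Complex.I) - 1) / ((θ:ℂ) * Complex.I)‖ ^ 2
      ≤ min 1 (4 / θ ^ 2) := by
  have hθ2 : (0:ℝ) < θ ^ 2 := by positivity
  have hnorm : ‖((θ:ℂ) * Complex.I)‖ = |θ| := by
    rw [norm_mul, Complex.norm_real, Complex.norm_I, mul_one, Real.norm_eq_abs]
  rw [norm_div, hnorm, div_pow, norm_exp_sub_one_sq, sq_abs]
  refine le_min ?_ ?_
  · rw [div_le_one hθ2]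
    nlinarith [Real.one_sub_sq_div_two_le_cos (x := θ)]
  · rw [div_le_div_iff₀ hθ2 hθ2]
    nlinarith [Real.neg_one_le_cos θ]

lemma exists_dyadic (x : ℝ) (hx : 1 < x) : ∃ n : ℕ, (2:ℝ)^n < x ∧ x ≤ 2^(n+1) := by
  have hm : ∃ m : ℕ, x ≤ (2:ℝ)^(m+1) := by
    obtain ⟨m, hm⟩ := pow_unbounded_of_one_lt x (by norm_num : (1:ℝ) < 2)
    exact ⟨m, le_of_lt (lt_of_lt_of_le hm (pow_le_pow_right₀ (by norm_num) (Nat.le_succ m)))⟩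
  classical
  refine ⟨Nat.find hm, ?_, Nat.find_spec hm⟩
  rcases Nat.eq_zero_or_pos (Nat.find hm) with h0 | hpos
  · rw [h0]; simpa using hx
  · obtain ⟨k, hk⟩ := Nat.exists_eq_succ_of_ne_zero (Nat.pos_iff_ne_zero.mp hpos)
    have := Nat.find_min hm (m := k) (by omega)
    rw [hk]
    push_neg at this
    exact this

set_option maxHeartbeats 1000000 in
/-- If the finite measure `σ` satisfies `σ([λ-r, λ+r]) ≤ C r^{2β}` for
`0 < r ≤ r₀` with `0 ≤ β ≤ 1`, `β < 1`, then there is `C' > 0` such that for all `T ≥ 1/r₀`,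
`T² ∫ |(e^{-2πi(λ-ξ)T} - 1)/(2πi(λ-ξ)T)|² dσ(ξ) ≤ C' T^{2(1-β)}`
(the integrand, the kernel `K T ξ`, takes the value `1` at `ξ = λ`). -/
theorem stmt4 (σ : Measure ℝ) [IsFiniteMeasure σ] (lam : ℝ)
    (K : ℝ → ℝ → ℝ)
    (hKdiag : ∀ T : ℝ, K T lam = 1)
    (hKoff : ∀ T ξ : ℝ, ξ ≠ lam →
      K T ξ = ‖(Complex.exp (-(((2 * π * (lam - ξ) * T : ℝ) : ℂ)) * Complex.I) - 1) /
        (((2 * π * (lam - ξ) * T : ℝ) : ℂ) * Complex.I)‖ ^ 2)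
    (C r0 β : ℝ) (hC : 0 < C) (hr0 : 0 < r0) (hβ0 : 0 ≤ β) (hβ1 : β ≤ 1) (hβ : β < 1)
    (hσ : ∀ r : ℝ, 0 < r → r ≤ r0 →
      (σ (Icc (lam - r) (lam + r))).toReal ≤ C * r ^ (2 * β)) :
    ∃ C' : ℝ, 0 < C' ∧ ∀ T : ℝ, 1 / r0 ≤ T →
      T ^ 2 * ∫ ξ : ℝ, K T ξ ∂σ ≤ C' * T ^ (2 * (1 - β)) := by
  have hπ : (1:ℝ) < π := by have := Real.pi_gt_three; linarith
  have hπ0 : (0:ℝ) < π := by linarith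
  set S : ℝ := (σ (univ : Set ℝ)).toReal with hS
  have hS0 : 0 ≤ S := ENNReal.toReal_nonneg
  set C₁ : ℝ := C + S / r0 ^ (2*β) with hC₁def
  have hr0p : (0:ℝ) < r0 ^ (2*β) := Real.rpow_pos_of_pos hr0 _
  have hC₁pos : 0 < C₁ := by positivity
  have hCC₁ : C ≤ C₁ := le_add_of_nonneg_right (by positivity)
  have hσ' : ∀ r : ℝ, 0 < r → (σ (Icc (lam - r) (lam + r))).toReal ≤ C₁ * r ^ (2*β) := by
    intro r hr
    rcases le_or_gt r r0 with h | h
    · exact (hσ r hr h).trans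
        (mul_le_mul_of_nonneg_right hCC₁ (Real.rpow_nonneg hr.le _))
    · have h1 : (σ (Icc (lam - r) (lam + r))).toReal ≤ S :=
        ENNReal.toReal_mono (measure_ne_top σ _) (measure_mono (subset_univ _))
      have h2 : r0 ^ (2*β) ≤ r ^ (2*β) :=
        Real.rpow_le_rpow hr0.le h.le (by positivity)
      have h3 : 0 ≤ r ^ (2*β) := Real.rpow_nonneg hr.le _
      calc (σ (Icc (lam - r) (lam + r))).toReal ≤ S := h1
        _ = (S / r0^(2*β)) * r0^(2*β) := by field_simp
        _ ≤ (S / r0^(2*β)) * r^(2*β) := by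
            exact mul_le_mul_of_nonneg_left h2 (by positivity)
        _ ≤ C₁ * r^(2*β) := by
            apply mul_le_mul_of_nonneg_right _ h3
            rw [hC₁def]; linarith
  set q : ℝ := (2:ℝ) ^ (2*β - 2) with hq
  have hq0 : 0 < q := Real.rpow_pos_of_pos two_pos _
  have hq1 : q < 1 := Real.rpow_lt_one_of_one_lt_of_neg (by norm_num) (by linarith)
  have h1q : 0 < 1 - q := by linarith
  set D : ℝ := C₁ * (2:ℝ)^(2*β) / π^2 with hD
  have hD0 : 0 < D := by
    have : (0:ℝ) < (2:ℝ)^(2*β) := Real.rpow_pos_of_pos two_pos _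
    positivity
  refine ⟨C₁ + D * (1-q)⁻¹, by positivity, ?_⟩
  intro T hT
  have hT0 : 0 < T := lt_of_lt_of_le (by positivity) hT
  have hTr0 : 1/T ≤ r0 := by
    rw [div_le_iff₀ hT0]
    rw [div_le_iff₀ hr0] at hT
    linarith
  have hTinv0 : (0:ℝ) < 1/T := by positivity
  have hTb0 : (0:ℝ) < T ^ (-(2*β)) := Real.rpow_pos_of_pos hT0 _
  set F : ℝ → ℝ := fun ξ => if |ξ - lam| ≤ 1/T then 1 else 1/(π^2 * (ξ-lam)^2 * T^2) with hF
  have hFmeas : Measurable F := by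
    apply Measurable.ite
    · exact measurableSet_le (measurable_id.sub_const lam).abs measurable_const
    · exact measurable_const
    · exact measurable_const.div
        ((((measurable_id.sub_const lam).pow_const 2).const_mul (π^2)).mul_const (T^2))
  have hF0 : ∀ ξ, 0 ≤ F ξ := by
    intro ξ; simp only [hF]; split <;> positivity
  have hF1 : ∀ ξ, F ξ ≤ 1 := by
    intro ξ; simp only [hF]; split
    · exact le_refl 1
    · rename_i h
      push_neg at h
      have h1 : 1 < |ξ - lam| * T := by
        rw [div_lt_iff₀ hT0] at h; linarith
      have h2 : 1 ≤ (ξ-lam)^2 * T^2 := by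
        nlinarith [sq_abs (ξ-lam), abs_nonneg (ξ-lam)]
      rw [div_le_one (by nlinarith)]
      nlinarith
  have hKF : ∀ ξ, K T ξ ≤ F ξ := by
    intro ξ
    by_cases hξ : ξ = lam
    · subst hξ
      rw [hKdiag]
      simp only [hF, sub_self, abs_zero]
      rw [if_pos hTinv0.le]
    · rw [hKoff T ξ hξ]
      have hsub : lam - ξ ≠ 0 := sub_ne_zero.mpr (Ne.symm hξ)
      have hθ : (2*π*(lam-ξ)*T) ≠ 0 :=
        mul_ne_zero (mul_ne_zero (mul_ne_zero two_ne_zero (ne_of_gt hπ0)) hsub) (ne_of_gt hT0)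
      refine (kernel_le _ hθ).trans ?_
      simp only [hF]; split
      · exact min_le_left _ _
      · refine (min_le_right _ _).trans (le_of_eq ?_)
        have h5 : (0:ℝ) < (ξ-lam)^2 := by
          rcases (sub_ne_zero.mpr hξ).lt_or_gt with h | h <;> nlinarith
        have h6 : (0:ℝ) < π^2 * (ξ-lam)^2 * T^2 :=
          mul_pos (mul_pos (pow_pos hπ0 2) h5) (pow_pos hT0 2)
        rw [show (2*π*(lam-ξ)*T)^2 = 4*(π^2 * (ξ-lam)^2 * T^2) by ring]
        rw [div_eq_div_iff (by positivity) (ne_of_gt h6)]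
        ring
  have hK0 : ∀ ξ, 0 ≤ K T ξ := by
    intro ξ
    by_cases hξ : ξ = lam
    · subst hξ; rw [hKdiag]; norm_num
    · rw [hKoff T ξ hξ]; positivity
  have hKmeas : Measurable (K T) := by
    have hKeq : K T = fun ξ => if ξ = lam then 1 else
        ‖(Complex.exp (-(((2 * π * (lam - ξ) * T : ℝ) : ℂ)) * Complex.I) - 1) /
          (((2 * π * (lam - ξ) * T : ℝ) : ℂ) * Complex.I)‖ ^ 2 := by
      funext ξ
      by_cases hξ : ξ = lam
      · simp [hξ, hKdiag]
      · simp only [if_neg hξ]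
        exact hKoff T ξ hξ
    rw [hKeq]
    apply Measurable.ite (measurableSet_eq) measurable_const
    fun_prop
  have hKint : Integrable (K T) σ := by
    refine ⟨hKmeas.aestronglyMeasurable, ?_⟩
    apply HasFiniteIntegral.of_bounded (C := 1)
    filter_upwards with ξ
    rw [Real.norm_eq_abs, abs_le]
    exact ⟨by linarith [hK0 ξ], (hKF ξ).trans (hF1 ξ)⟩
  have hFint : Integrable F σ := by
    refine ⟨hFmeas.aestronglyMeasurable, ?_⟩
    apply HasFiniteIntegral.of_bounded (C := 1)
    filter_upwards with ξ
    rw [Real.norm_eq_abs, abs_le]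
    exact ⟨by linarith [hF0 ξ], hF1 ξ⟩
  have step1 : ∫ ξ, K T ξ ∂σ ≤ ∫ ξ, F ξ ∂σ := integral_mono hKint hFint hKF
  have hFlint : ∫ ξ, F ξ ∂σ = (∫⁻ ξ, ENNReal.ofReal (F ξ) ∂σ).toReal :=
    integral_eq_lintegral_of_nonneg_ae (ae_of_all _ hF0) hFmeas.aestronglyMeasurable
  set N : Set ℝ := Icc (lam - 1/T) (lam + 1/T) with hN
  have hNmeas : MeasurableSet N := measurableSet_Icc
  have hmemN : ∀ ξ : ℝ, ξ ∈ N ↔ |ξ - lam| ≤ 1/T := by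
    intro ξ
    rw [hN, mem_Icc, abs_le]
    constructor <;> (intro h; constructor <;> linarith [h.1, h.2])
  have hsplit : ∫⁻ ξ, ENNReal.ofReal (F ξ) ∂σ
      = (∫⁻ ξ in N, ENNReal.ofReal (F ξ) ∂σ) + ∫⁻ ξ in Nᶜ, ENNReal.ofReal (F ξ) ∂σ :=
    (lintegral_add_compl _ hNmeas).symm
  have hnear : ∫⁻ ξ in N, ENNReal.ofReal (F ξ) ∂σ ≤ ENNReal.ofReal (C₁ * (1/T)^(2*β)) := by
    calc ∫⁻ ξ in N, ENNReal.ofReal (F ξ) ∂σ ≤ ∫⁻ _ in N, 1 ∂σ := by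
          apply lintegral_mono
          intro ξ
          exact ENNReal.ofReal_le_one.mpr (hF1 ξ)
      _ = σ N := by rw [lintegral_one, Measure.restrict_apply_univ]
      _ ≤ ENNReal.ofReal (C₁ * (1/T)^(2*β)) :=
          (ENNReal.le_ofReal_iff_toReal_le (measure_ne_top σ N) (by positivity)).mpr
            (hσ' (1/T) hTinv0)
  set A : ℕ → Set ℝ :=
    fun n => {ξ : ℝ | (2:ℝ)^n / T < |ξ - lam|} ∩ {ξ : ℝ | |ξ - lam| ≤ 2^(n+1)/T} with hA
  have hcover : Nᶜ ⊆ ⋃ n, A n := by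
    intro ξ hξ
    rw [mem_compl_iff, hmemN] at hξ
    push_neg at hξ
    have hx : 1 < |ξ - lam| * T := by
      rw [div_lt_iff₀ hT0] at hξ; linarith
    obtain ⟨n, h1, h2⟩ := exists_dyadic _ hx
    refine mem_iUnion.mpr ⟨n, ?_, ?_⟩
    · show (2:ℝ)^n / T < |ξ - lam|
      rw [div_lt_iff₀ hT0]; linarith
    · show |ξ - lam| ≤ (2:ℝ)^(n+1)/T
      rw [le_div_iff₀ hT0]; linarith
  have hann : ∀ n : ℕ, ∫⁻ ξ in A n, ENNReal.ofReal (F ξ) ∂σ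
      ≤ ENNReal.ofReal (D * T^(-(2*β))) * ENNReal.ofReal q ^ n := by
    intro n
    have h2n1 : (0:ℝ) < (2:ℝ)^(n+1)/T := by positivity
    have h4n : (0:ℝ) < (4:ℝ)^n := by positivity
    have key : (1/(π^2 * (4:ℝ)^n)) * (C₁ * ((2:ℝ)^(n+1)/T)^(2*β))
        = D * T^(-(2*β)) * q^n := by
      have e1 : ((2:ℝ)^(n+1)/T)^(2*β) = (2:ℝ)^(((n:ℝ)+1)*(2*β)) * T^(-(2*β)) := by
        rw [Real.div_rpow (by positivity) hT0.le, ← Real.rpow_natCast (2:ℝ) (n+1),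
          ← Real.rpow_mul (by norm_num : (0:ℝ) ≤ 2), Real.rpow_neg hT0.le, div_eq_mul_inv]
        push_cast
        ring_nf
      have e2 : ((4:ℝ))^n = (2:ℝ)^(2*(n:ℝ)) := by
        rw [show (4:ℝ) = 2^(2:ℕ) by norm_num, ← pow_mul, ← Real.rpow_natCast (2:ℝ) (2*n)]
        push_cast
        ring_nf
      have e3 : q^n = (2:ℝ)^((2*β-2)*(n:ℝ)) := by
        rw [hq, ← Real.rpow_natCast ((2:ℝ)^(2*β-2)) n,
          ← Real.rpow_mul (by norm_num : (0:ℝ) ≤ 2)]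
      have e4 : (2:ℝ)^(((n:ℝ)+1)*(2*β)) = 2^(2*β) * 2^((2*β-2)*(n:ℝ)) * 2^(2*(n:ℝ)) := by
        rw [← Real.rpow_add two_pos, ← Real.rpow_add two_pos]
        ring_nf
      rw [e1, e2, e3, e4, hD]
      have hpos : (0:ℝ) < (2:ℝ)^(2*(n:ℝ)) := Real.rpow_pos_of_pos two_pos _
      field_simp
    calc ∫⁻ ξ in A n, ENNReal.ofReal (F ξ) ∂σ
        ≤ ∫⁻ _ in A n, ENNReal.ofReal (1/(π^2 * 4^n)) ∂σ := by
          apply setLIntegral_mono measurable_const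
          intro ξ hξ
          obtain ⟨hlo, hhi⟩ := hξ
          simp only [Set.mem_setOf_eq] at hlo hhi
          have h1n : (1:ℝ) ≤ (2:ℝ)^n := one_le_pow₀ (by norm_num)
          have hgt : 1/T < |ξ - lam| :=
            lt_of_le_of_lt ((div_le_div_iff_of_pos_right hT0).mpr h1n) hlo
          have hFeq : F ξ = 1/(π^2*(ξ-lam)^2*T^2) := if_neg (not_le.mpr hgt)
          rw [hFeq]
          apply ENNReal.ofReal_le_ofReal
          have h1 : (2:ℝ)^n < |ξ - lam| * T := by
            rw [div_lt_iff₀ hT0] at hlo; linarith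
          have h4 : ((4:ℝ))^n = ((2:ℝ)^n)^2 := by
            rw [← pow_mul, show (4:ℝ) = 2^(2:ℕ) by norm_num, ← pow_mul]
            ring_nf
          have h2 : (4:ℝ)^n ≤ (ξ - lam)^2 * T^2 := by
            rw [h4]
            nlinarith [sq_abs (ξ-lam), abs_nonneg (ξ-lam), pow_pos (show (0:ℝ)<2 by norm_num) n]
          have h5 : (0:ℝ) < (ξ-lam)^2 * T^2 := by
            nlinarith [sq_abs (ξ-lam), abs_nonneg (ξ-lam)]
          rw [div_le_div_iff₀ (by nlinarith [pow_pos hπ0 2]) (by positivity)]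
          nlinarith [pow_pos hπ0 2]
      _ = ENNReal.ofReal (1/(π^2 * 4^n)) * σ (A n) := setLIntegral_const _ _
      _ ≤ ENNReal.ofReal (1/(π^2 * 4^n))
            * ENNReal.ofReal (C₁ * ((2:ℝ)^(n+1)/T)^(2*β)) := by
          apply mul_le_mul_right
          have hsub : A n ⊆ Icc (lam - 2^(n+1)/T) (lam + 2^(n+1)/T) := by
            intro ξ hξ
            obtain ⟨_, h⟩ := hξ
            simp only [Set.mem_setOf_eq] at h
            have := abs_le.mp h
            rw [mem_Icc]
            constructor <;> linarith [this.1, this.2]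
          calc σ (A n) ≤ σ (Icc (lam - 2^(n+1)/T) (lam + 2^(n+1)/T)) := measure_mono hsub
            _ ≤ ENNReal.ofReal (C₁ * ((2:ℝ)^(n+1)/T)^(2*β)) :=
                (ENNReal.le_ofReal_iff_toReal_le (measure_ne_top _ _) (by positivity)).mpr
                  (hσ' _ h2n1)
      _ = ENNReal.ofReal ((1/(π^2 * 4^n)) * (C₁ * ((2:ℝ)^(n+1)/T)^(2*β))) :=
          (ENNReal.ofReal_mul (by positivity)).symm
      _ = ENNReal.ofReal (D * T^(-(2*β)) * q^n) := by rw [key]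
      _ = ENNReal.ofReal (D * T^(-(2*β))) * ENNReal.ofReal q ^ n := by
          rw [ENNReal.ofReal_mul (by positivity), ENNReal.ofReal_pow hq0.le]
  have hgeo : (1 - ENNReal.ofReal q)⁻¹ = ENNReal.ofReal ((1-q)⁻¹) := by
    rw [← ENNReal.ofReal_one, ← ENNReal.ofReal_sub _ hq0.le,
      ENNReal.ofReal_inv_of_pos h1q]
  have hfar : ∫⁻ ξ in Nᶜ, ENNReal.ofReal (F ξ) ∂σ
      ≤ ENNReal.ofReal (D * T^(-(2*β))) * ENNReal.ofReal ((1-q)⁻¹) := by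
    calc ∫⁻ ξ in Nᶜ, ENNReal.ofReal (F ξ) ∂σ
        ≤ ∫⁻ ξ in ⋃ n, A n, ENNReal.ofReal (F ξ) ∂σ := lintegral_mono_set hcover
      _ ≤ ∑' n, ∫⁻ ξ in A n, ENNReal.ofReal (F ξ) ∂σ := lintegral_iUnion_le _ _
      _ ≤ ∑' n : ℕ, ENNReal.ofReal (D * T^(-(2*β))) * ENNReal.ofReal q ^ n :=
          ENNReal.tsum_le_tsum hann
      _ = ENNReal.ofReal (D * T^(-(2*β))) * ∑' n : ℕ, ENNReal.ofReal q ^ n :=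
          ENNReal.tsum_mul_left
      _ = ENNReal.ofReal (D * T^(-(2*β))) * (1 - ENNReal.ofReal q)⁻¹ := by
          rw [ENNReal.tsum_geometric]
      _ = ENNReal.ofReal (D * T^(-(2*β))) * ENNReal.ofReal ((1-q)⁻¹) := by rw [hgeo]
  have hTpow : (1/T)^(2*β) = T^(-(2*β)) := by
    rw [one_div, Real.inv_rpow hT0.le, ← Real.rpow_neg hT0.le]
  have htot : ∫⁻ ξ, ENNReal.ofReal (F ξ) ∂σ
      ≤ ENNReal.ofReal ((C₁ + D*(1-q)⁻¹) * T^(-(2*β))) := by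
    rw [hsplit]
    calc (∫⁻ ξ in N, ENNReal.ofReal (F ξ) ∂σ) + ∫⁻ ξ in Nᶜ, ENNReal.ofReal (F ξ) ∂σ
        ≤ ENNReal.ofReal (C₁ * (1/T)^(2*β))
            + ENNReal.ofReal (D * T^(-(2*β))) * ENNReal.ofReal ((1-q)⁻¹) :=
          add_le_add hnear hfar
      _ = ENNReal.ofReal ((C₁ + D*(1-q)⁻¹) * T^(-(2*β))) := by
          rw [← ENNReal.ofReal_mul (by positivity),
            ← ENNReal.ofReal_add (by positivity) (by positivity), hTpow]
          congr 1
          ring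
  have hfin : ∫ ξ, F ξ ∂σ ≤ (C₁ + D*(1-q)⁻¹) * T^(-(2*β)) := by
    rw [hFlint]
    exact ENNReal.toReal_le_of_le_ofReal (by positivity) htot
  have hexp : T^(2:ℕ) * T^(-(2*β)) = T^(2*(1-β)) := by
    rw [← Real.rpow_natCast T 2, ← Real.rpow_add hT0]
    congr 1
    push_cast
    ring
  calc T^2 * ∫ ξ, K T ξ ∂σ ≤ T^2 * ((C₁ + D*(1-q)⁻¹) * T^(-(2*β))) := by
        apply mul_le_mul_of_nonneg_left (step1.trans hfin) (by positivity)
    _ = (C₁ + D*(1-q)⁻¹) * (T^(2:ℕ) * T^(-(2*β))) := by ring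
    _ = (C₁ + D*(1-q)⁻¹) * T^(2*(1-β)) := by rw [hexp]
end

section
/- Let $(\phi_t)$ be a measure-preserving flow on a probability space $(M,\mu)$ and $f, g\in L^2(M,\mu)$ with joint spectral measure $\sigma_{f,g}$ and individual spectral measures $\sigma_f, \sigma_g$. Suppose there exist $\alpha, \beta > 0$ and a constant $I > 1$ such that for all $\lambda \in \mathbb{R}\setminus\{0\}$ and all $T > 1$, $\|\int_0^T e^{2\pi i\lambda t} f\circ\phi_t\,dt\|_{L^2} \le I |\lambda|^{-\beta} T^{1-\alpha}$, and also $\|\int_0^T f\circ\phi_t\,dt\|_{L^2} \le I\, T^{1-\alpha}$. Then there exist constants $\alpha' = \alpha'(\alpha,\beta) > 0$ and $C>0$ such that for all $T > 1$: $\frac{1}{T}\int_0^T |\langle f\circ\phi_t, g\rangle_{L^2}|^2\, dt \le C\, I\, \|f\|_{L^2}\, \|g\|_{L^2}^2\, T^{-\alpha'}$. -/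
open MeasureTheory Real Set

private lemma norm_exp_mul_I_sub_one' (θ : ℝ) :
    ‖Complex.exp ((θ:ℂ) * Complex.I) - 1‖ = 2 * |Real.sin (θ/2)| := by
  have h : Complex.exp ((θ:ℂ) * Complex.I) - 1 =
      Complex.ofReal (Real.cos θ - 1) + Complex.ofReal (Real.sin θ) * Complex.I := by
    rw [Complex.exp_mul_I]
    push_cast [Complex.ofReal_cos, Complex.ofReal_sin]
    ring
  rw [h, Complex.norm_def, Complex.normSq_add_mul_I]
  have hh : Real.sin (θ/2) ^ 2 = 1/2 - Real.cos θ / 2 := by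
    have := Real.sin_sq_eq_half_sub (θ/2)
    rw [show 2 * (θ/2) = θ by ring] at this; linarith
  have h2 : (Real.cos θ - 1)^2 + (Real.sin θ)^2 = (2 * |Real.sin (θ/2)|)^2 := by
    have hpy := Real.sin_sq_add_cos_sq θ
    have hab : |Real.sin (θ/2)|^2 = Real.sin (θ/2)^2 := sq_abs _
    nlinarith
  rw [h2, Real.sqrt_sq (by positivity)]

set_option maxHeartbeats 2000000 in
/-- effective weak mixing from twisted ergodic integral bounds.
Abstract formalization: `corr t = ⟨f ∘ φ_t, g⟩`, `F λ T = ‖∫₀ᵀ e^{2πiλt} f∘φ_t dt‖`,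
`σf, σg` the spectral measures of `f, g` and `μ = |σ_{f,g}|` the total variation of the joint
spectral measure, with the standard identities (Cauchy–Schwarz for spectral measures, the
spectral identity for `F 0`, Hölder domination and the correlation identity) taken as
hypotheses, as indicated in the paper. If `F λ T ≤ I |λ|^{-β} T^{1-α}` for `λ ≠ 0` and
`F 0 T ≤ I T^{1-α}`, then there exist `α' > 0` and `C > 0` such that
`(1/T) ∫₀ᵀ |⟨f∘φ_t, g⟩|² dt ≤ C I ‖f‖ ‖g‖² T^{-α'}` for all `T > 1`. -/
theorem stmt5 (σf σg μ : Measure ℝ)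
    [IsFiniteMeasure σf] [IsFiniteMeasure σg] [IsFiniteMeasure μ]
    (corr : ℝ → ℂ) (F : ℝ → ℝ → ℝ) (K : ℝ → ℝ → ℝ)
    (nf ng : ℝ) (hnf : 0 ≤ nf) (hng : 0 ≤ ng)
    (α β I0 : ℝ) (hα : 0 < α) (hβ : 0 < β) (hI : 1 < I0)
    (hσf : (σf Set.univ).toReal = nf ^ 2)
    (hσg : (σg Set.univ).toReal = ng ^ 2)
    (hμ : ∀ A : Set ℝ, MeasurableSet A →
      (μ A).toReal ≤ Real.sqrt ((σf A).toReal) * Real.sqrt ((σg A).toReal))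
    (hcorr : ∀ t : ℝ, ‖corr t‖ ≤ nf * ng)
    (hFnn : ∀ lam T : ℝ, 0 ≤ F lam T)
    (hKdiag : ∀ T : ℝ, K T 0 = T ^ 2)
    (hKoff : ∀ T ξ : ℝ, ξ ≠ 0 →
      K T ξ = ‖(Complex.exp ((((2 * π * ξ * T : ℝ) : ℂ)) * Complex.I) - 1) /
        (((2 * π * ξ : ℝ) : ℂ) * Complex.I)‖ ^ 2)
    (hspec : ∀ T : ℝ, 0 < T → F 0 T ^ 2 = ∫ ξ : ℝ, K T ξ ∂σf)
    (hdom : ∀ lam T : ℝ,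
      ‖∫ t in (0:ℝ)..T, Complex.exp (((2 * π * lam * t : ℝ) : ℂ) * Complex.I) * corr t‖ ≤
        ng * F lam T)
    (hident : ∀ T : ℝ, 1 < T →
      (∫ t in (0:ℝ)..T, ‖corr t‖ ^ 2) ≤
        ∫ lam : ℝ,
          ‖∫ t in (0:ℝ)..T, Complex.exp (((2 * π * lam * t : ℝ) : ℂ) * Complex.I) * corr t‖ ∂μ)
    (hF : ∀ lam : ℝ, lam ≠ 0 → ∀ T : ℝ, 1 < T → F lam T ≤ I0 * |lam| ^ (-β) * T ^ (1 - α))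
    (hF0 : ∀ T : ℝ, 1 < T → F 0 T ≤ I0 * T ^ (1 - α)) :
    ∃ α' : ℝ, 0 < α' ∧ ∃ C : ℝ, 0 < C ∧ ∀ T : ℝ, 1 < T →
      (1 / T) * ∫ t in (0:ℝ)..T, ‖corr t‖ ^ 2 ≤ C * I0 * nf * ng ^ 2 * T ^ (-α') := by
  have hπ := Real.pi_pos
  have hI0 : (0:ℝ) < I0 := by linarith
  set η : ℝ := α / (2*β) with hηdef
  have hη : 0 < η := by positivity
  have hηβ : η * β = α / 2 := by rw [hηdef, div_mul_eq_mul_div, div_eq_div_iff (by positivity) (by norm_num)]; ring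
  set α' : ℝ := min (η*α) (α/2) with hα'def
  refine ⟨α', lt_min (mul_pos hη hα) (half_pos hα), π/2 + (4:ℝ) ^ β, by positivity, ?_⟩
  intro T hT
  have hT0 : (0:ℝ) < T := by linarith
  have hTη : (1:ℝ) < T ^ η := (Real.one_lt_rpow_iff_of_pos hT0).2 (Or.inl ⟨hT, hη⟩)
  have hTη0 : (0:ℝ) < T ^ η := by linarith
  set T' : ℝ := 2 * T ^ η with hT'def
  have hT'1 : (1:ℝ) < T' := by rw [hT'def]; nlinarith
  have hT'0 : (0:ℝ) < T' := by linarith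
  set r : ℝ := T ^ (-η) / 4 with hrdef
  have hr0 : 0 < r := by rw [hrdef]; positivity
  have hrT' : r * T' = 1/2 := by
    rw [hrdef, hT'def, Real.rpow_neg hT0.le]
    field_simp
    ring
  set A : Set ℝ := {l : ℝ | |l| ≤ r} with hAdef
  have hAmeas : MeasurableSet A := (isClosed_le continuous_abs continuous_const).measurableSet
  -- K values
  have hKval : ∀ ξ : ℝ, ξ ≠ 0 → K T' ξ = (|Real.sin (π*ξ*T')| / (π * |ξ|))^2 := by
    intro ξ hξ
    rw [hKoff T' ξ hξ, norm_div, norm_exp_mul_I_sub_one']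
    have h1 : ‖(((2*π*ξ : ℝ)):ℂ) * Complex.I‖ = 2*(π*|ξ|) := by
      rw [norm_mul, Complex.norm_I, mul_one, Complex.norm_real, Real.norm_eq_abs]
      rw [abs_mul, abs_mul, abs_of_pos hπ, abs_two]
      ring
    rw [h1, show (2*π*ξ*T')/2 = π*ξ*T' by ring]
    have hξa : (0:ℝ) < |ξ| := abs_pos.2 hξ
    congr 1
    field_simp
  have hKnn : ∀ ξ : ℝ, 0 ≤ K T' ξ := by
    intro ξ
    by_cases h : ξ = 0
    · rw [h, hKdiag]; positivity
    · rw [hKval ξ h]; positivity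
  have hKub : ∀ ξ : ℝ, K T' ξ ≤ T'^2 := by
    intro ξ
    by_cases h : ξ = 0
    · rw [h, hKdiag]
    · rw [hKval ξ h]
      have hξa : (0:ℝ) < |ξ| := abs_pos.2 h
      apply pow_le_pow_left₀ (by positivity)
      rw [div_le_iff₀ (by positivity)]
      calc |Real.sin (π*ξ*T')| ≤ |π*ξ*T'| := Real.abs_sin_le_abs
        _ = T' * (π * |ξ|) := by
            rw [abs_mul, abs_mul, abs_of_pos hπ, abs_of_pos hT'0]; ring
  have hKlb : ∀ ξ ∈ A, (2*T'/π)^2 ≤ K T' ξ := by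
    intro ξ hξA
    have habs : |ξ| * T' ≤ 1/2 := by
      have h1 : |ξ| ≤ r := hξA
      calc |ξ| * T' ≤ r * T' := mul_le_mul_of_nonneg_right h1 hT'0.le
        _ = 1/2 := hrT'
    by_cases h : ξ = 0
    · rw [h, hKdiag, div_pow, div_le_iff₀ (by positivity)]
      have h9 : (9:ℝ) < π^2 := by nlinarith [Real.pi_gt_three]
      nlinarith [h9, sq_nonneg T']
    · rw [hKval ξ h]
      have hξa : (0:ℝ) < |ξ| := abs_pos.2 h
      apply pow_le_pow_left₀ (by positivity)
      have hx0 : 0 ≤ π*|ξ| *T' := by positivity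
      have hx2 : π*|ξ| *T' ≤ π/2 := by nlinarith
      have hms := Real.mul_le_sin hx0 hx2
      have hodd : Real.sin (π*|ξ| *T') ≤ |Real.sin (π*ξ*T')| := by
        rcases le_or_gt 0 ξ with hs|hs
        · rw [abs_of_nonneg hs]; exact le_abs_self _
        · rw [abs_of_neg hs, show π*(-ξ)*T' = -(π*ξ*T') by ring, Real.sin_neg]
          exact neg_le_abs _
      have hsin : 2*(|ξ| *T') ≤ |Real.sin (π*ξ*T')| := by
        calc 2*(|ξ| *T') = 2/π * (π*|ξ| *T') := by field_simp
          _ ≤ Real.sin (π*|ξ| *T') := hms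
          _ ≤ |Real.sin (π*ξ*T')| := hodd
      have heq : 2*T'/π = (2*(|ξ| *T'))/(π*|ξ|) := by
        field_simp
      rw [heq]
      exact div_le_div_of_nonneg_right hsin (by positivity) |>.trans_eq rfl
  -- integrability of K T' w.r.t. σf
  have hKfun : K T' = fun ξ : ℝ => if ξ = 0 then T'^2 else (|Real.sin (π*ξ*T')| / (π * |ξ|))^2 := by
    funext ξ
    by_cases h : ξ = 0
    · simp [h, hKdiag]
    · simp [h, hKval ξ h]
  have hKmeas : Measurable (K T') := by
    rw [hKfun]
    have mcont : Measurable fun ξ : ℝ => (|Real.sin (π*ξ*T')| / (π * |ξ|))^2 := by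
      apply Measurable.pow_const
      exact ((Real.continuous_sin.comp
        ((continuous_const.mul continuous_id).mul continuous_const)).abs.measurable).div
        ((continuous_const.mul continuous_abs).measurable)
    exact Measurable.ite (measurableSet_eq) measurable_const mcont
  have hKint : Integrable (K T') σf := by
    apply Integrable.mono' (integrable_const (T'^2)) hKmeas.aestronglyMeasurable
    exact ae_of_all _ fun ξ => by
      rw [Real.norm_eq_abs, abs_of_nonneg (hKnn ξ)]; exact hKub ξ
  -- σf A bound
  have hσfA : (σf A).toReal ≤ ((π/2) * (I0 * T' ^ (-α)))^2 := by
    have h1 : (σf A).toReal * ((2*T'/π)^2) ≤ ∫ ξ in A, K T' ξ ∂σf := by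
      have e : ∫ _ in A, ((2*T'/π)^2) ∂σf = (σf A).toReal * ((2*T'/π)^2) := by
        rw [setIntegral_const, smul_eq_mul, measureReal_def]
      rw [← e]
      exact setIntegral_mono_on
        (integrableOn_const (measure_ne_top σf A))
        hKint.integrableOn hAmeas hKlb
    have h2 : ∫ ξ in A, K T' ξ ∂σf ≤ ∫ ξ, K T' ξ ∂σf :=
      setIntegral_le_integral hKint (ae_of_all _ hKnn)
    have h3 : (∫ ξ, K T' ξ ∂σf) = F 0 T' ^ 2 := (hspec T' hT'0).symm
    have h4 : F 0 T' ^ 2 ≤ (I0 * T'^(1-α))^2 := pow_le_pow_left₀ (hFnn 0 T') (hF0 T' hT'1) 2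
    have h5 : (I0*T'^(1-α))^2 = ((π/2) * (I0 * T' ^ (-α)))^2 * ((2*T'/π)^2) := by
      have e : T'^(1-α) = T' * T'^(-α) := by
        rw [show (1-α) = 1 + (-α) by ring, Real.rpow_add hT'0, Real.rpow_one]
      rw [e]; field_simp
    have hc : (0:ℝ) < (2*T'/π)^2 := by positivity
    have : (σf A).toReal * ((2*T'/π)^2) ≤ ((π/2) * (I0 * T' ^ (-α)))^2 * ((2*T'/π)^2) := by
      rw [← h5]; linarith
    exact le_of_mul_le_mul_right this hc
  have sqrtσfA : Real.sqrt ((σf A).toReal) ≤ (π/2) * (I0 * T'^(-α)) := by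
    rw [show (π/2) * (I0*T'^(-α)) = Real.sqrt (((π/2)*(I0*T'^(-α)))^2) from
      (Real.sqrt_sq (by positivity)).symm]
    exact Real.sqrt_le_sqrt hσfA
  have sqrtσgA : Real.sqrt ((σg A).toReal) ≤ ng := by
    have h1 : (σg A).toReal ≤ ng^2 := by
      rw [← hσg]
      exact ENNReal.toReal_mono (measure_ne_top σg _) (measure_mono (subset_univ _))
    calc Real.sqrt ((σg A).toReal) ≤ Real.sqrt (ng^2) := Real.sqrt_le_sqrt h1
      _ = ng := Real.sqrt_sq hng
  have hμA : (μ A).toReal ≤ ((π/2) * (I0 * T'^(-α))) * ng :=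
    (hμ A hAmeas).trans (mul_le_mul sqrtσfA sqrtσgA (Real.sqrt_nonneg _) (by positivity))
  have hμAc : (μ Aᶜ).toReal ≤ nf * ng := by
    have h1 : (μ Aᶜ).toReal ≤ (μ univ).toReal :=
      ENNReal.toReal_mono (measure_ne_top _ _) (measure_mono (subset_univ _))
    have h2 := hμ univ MeasurableSet.univ
    rw [hσf, hσg, Real.sqrt_sq hnf, Real.sqrt_sq hng] at h2
    linarith
  -- the pointwise bound B
  set c₁ : ℝ := nf*ng*T with hc₁def
  set c₂ : ℝ := ng * (I0 * ((4:ℝ)^β * T^(η*β)) * T^(1-α)) with hc₂def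
  have hc₁nn : 0 ≤ c₁ := by rw [hc₁def]; positivity
  have hc₂nn : 0 ≤ c₂ := by rw [hc₂def]; positivity
  set G : ℝ → ℝ := fun l =>
    ‖∫ t in (0:ℝ)..T, Complex.exp (((2 * π * l * t : ℝ) : ℂ) * Complex.I) * corr t‖ with hGdef
  have hGb1 : ∀ l ∈ A, G l ≤ c₁ := by
    intro l _
    rw [hGdef, hc₁def]
    have := intervalIntegral.norm_integral_le_of_norm_le_const
      (C := nf*ng) (f := fun t => Complex.exp (((2 * π * l * t : ℝ) : ℂ) * Complex.I) * corr t)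
      (a := (0:ℝ)) (b := T) ?_
    · calc _ ≤ nf*ng * |T - 0| := this
        _ = nf*ng*T := by rw [sub_zero, abs_of_pos hT0]
    · intro t _
      rw [norm_mul, Complex.norm_exp_ofReal_mul_I, one_mul]
      exact hcorr t
  have hGb2 : ∀ l ∉ A, G l ≤ c₂ := by
    intro l hl
    have hlr : r < |l| := not_le.mp hl
    have hl0 : l ≠ 0 := by
      intro h; rw [h, abs_zero] at hlr; linarith
    have hb : |l|^(-β) ≤ r^(-β) :=
      Real.rpow_le_rpow_of_nonpos hr0 hlr.le (neg_nonpos.2 hβ.le)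
    have hre : r^(-β) = (4:ℝ)^β * T^(η*β) := by
      rw [hrdef, Real.div_rpow (by positivity) (by norm_num),
        ← Real.rpow_mul hT0.le, Real.rpow_neg (by norm_num : (0:ℝ) ≤ 4),
        div_inv_eq_mul, show -η * -β = η*β by ring]
      ring
    calc G l ≤ ng * F l T := hdom l T
      _ ≤ ng * (I0 * |l|^(-β) * T^(1-α)) :=
          mul_le_mul_of_nonneg_left (hF l hl0 T hT) hng
      _ ≤ c₂ := by
          rw [hc₂def, ← hre]
          have : I0 * |l|^(-β) * T^(1-α) ≤ I0 * r^(-β) * T^(1-α) := by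
            apply mul_le_mul_of_nonneg_right _ (by positivity)
            exact mul_le_mul_of_nonneg_left hb hI0.le
          exact mul_le_mul_of_nonneg_left this hng
  set B : ℝ → ℝ := fun l => A.indicator (fun _ => c₁) l + Aᶜ.indicator (fun _ => c₂) l with hBdef
  have hGB : ∀ l, G l ≤ B l := by
    intro l
    by_cases h : l ∈ A
    · have : B l = c₁ := by
        rw [hBdef]; simp only [indicator_of_mem h, indicator_of_notMem (by simp [h] : l ∉ Aᶜ)]
        ring
      rw [this]; exact hGb1 l h
    · have : B l = c₂ := by
        rw [hBdef]; simp only [indicator_of_notMem h, indicator_of_mem (mem_compl h)]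
        ring
      rw [this]; exact hGb2 l h
  have hBint : Integrable B μ :=
    ((integrable_const c₁).indicator hAmeas).add ((integrable_const c₂).indicator hAmeas.compl)
  have hIB : (∫ l, B l ∂μ) = c₁ * (μ A).toReal + c₂ * (μ Aᶜ).toReal := by
    rw [hBdef]
    rw [integral_add ((integrable_const c₁).indicator hAmeas)
      ((integrable_const c₂).indicator hAmeas.compl),
      integral_indicator_const _ hAmeas, integral_indicator_const _ hAmeas.compl,
      smul_eq_mul, smul_eq_mul, measureReal_def, measureReal_def]
    ring
  have hmain : (∫ t in (0:ℝ)..T, ‖corr t‖ ^ 2) ≤ c₁ * (μ A).toReal + c₂ * (μ Aᶜ).toReal := by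
    refine (hident T hT).trans ?_
    refine le_trans ?_ hIB.le
    exact integral_mono_of_nonneg (ae_of_all _ fun l => norm_nonneg _) hBint (ae_of_all _ hGB)
  -- exponent comparisons
  have hT'α : T'^(-α) ≤ T^(-α') := by
    calc T'^(-α) ≤ (T^η)^(-α) := by
          apply Real.rpow_le_rpow_of_nonpos hTη0 _ (neg_nonpos.2 hα.le)
          rw [hT'def]; linarith
      _ = T^(-(η*α)) := by
          rw [← Real.rpow_mul hT0.le]; ring_nf
      _ ≤ T^(-α') := by
          apply Real.rpow_le_rpow_of_exponent_le hT.le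
          have : α' ≤ η*α := min_le_left _ _
          linarith
  have hTexp : T^(η*β) * T^(1-α) ≤ T * T^(-α') := by
    rw [← Real.rpow_add hT0, hηβ]
    calc T^(α/2 + (1-α)) ≤ T^(1 + -α') := by
          apply Real.rpow_le_rpow_of_exponent_le hT.le
          have : α' ≤ α/2 := min_le_right _ _
          linarith
      _ = T * T^(-α') := by rw [Real.rpow_add hT0, Real.rpow_one]
  -- combine
  have h1 : c₁ * (μ A).toReal ≤ (π/2) * (I0*nf*ng^2) * (T * T^(-α')) := by
    calc c₁ * (μ A).toReal ≤ c₁ * (((π/2)*(I0*T'^(-α))) * ng) :=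
          mul_le_mul_of_nonneg_left hμA hc₁nn
      _ = ((π/2) * (I0*nf*ng^2)) * (T * T'^(-α)) := by rw [hc₁def]; ring
      _ ≤ ((π/2) * (I0*nf*ng^2)) * (T * T^(-α')) := by
          apply mul_le_mul_of_nonneg_left _ (by positivity)
          exact mul_le_mul_of_nonneg_left hT'α hT0.le
  have h2 : c₂ * (μ Aᶜ).toReal ≤ (4:ℝ)^β * (I0*nf*ng^2) * (T * T^(-α')) := by
    calc c₂ * (μ Aᶜ).toReal ≤ c₂ * (nf*ng) := mul_le_mul_of_nonneg_left hμAc hc₂nn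
      _ = ((4:ℝ)^β * (I0*nf*ng^2)) * (T^(η*β) * T^(1-α)) := by rw [hc₂def]; ring
      _ ≤ ((4:ℝ)^β * (I0*nf*ng^2)) * (T * T^(-α')) := by
          apply mul_le_mul_of_nonneg_left hTexp (by positivity)
  have hfin : (∫ t in (0:ℝ)..T, ‖corr t‖ ^ 2) ≤
      (π/2 + (4:ℝ)^β) * (I0*nf*ng^2) * (T * T^(-α')) := by
    calc (∫ t in (0:ℝ)..T, ‖corr t‖ ^ 2) ≤ c₁ * (μ A).toReal + c₂ * (μ Aᶜ).toReal := hmain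
      _ ≤ (π/2) * (I0*nf*ng^2) * (T * T^(-α')) + (4:ℝ)^β * (I0*nf*ng^2) * (T * T^(-α')) := by
          linarith
      _ = (π/2 + (4:ℝ)^β) * (I0*nf*ng^2) * (T * T^(-α')) := by ring
  have heq : (1/T) * ((π/2 + (4:ℝ)^β) * (I0*nf*ng^2) * (T * T^(-α'))) =
      (π/2 + (4:ℝ)^β) * I0 * nf * ng^2 * T^(-α') := by
    field_simp
  calc (1/T) * ∫ t in (0:ℝ)..T, ‖corr t‖ ^ 2
      ≤ (1/T) * ((π/2 + (4:ℝ)^β) * (I0*nf*ng^2) * (T * T^(-α'))) :=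
        mul_le_mul_of_nonneg_left hfin (by positivity)
    _ = (π/2 + (4:ℝ)^β) * I0 * nf * ng^2 * T^(-α') := heq
end
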